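/- Let a ≥ 3 be an odd integer and let p, q be integers with 0 ≤ p < q, p + q odd, and p + q ≤ a. Then the line L = {(x, y) ∈ ℝ² : p·x = q·y} is disjoint from the open square of center ((2U+1)/(2a^N), (2V+1)/(2a^N)) and side length 1/a^{N+1}, for every natural number N and all integers U, V. In particular, a line through the origin with slope in A_a avoids every open square omitted in the construction of the Sierpinski carpet S_a. -/

import Mathlib

/-- The open axis-parallel square with center `((2U+1)/(2a^N), (2V+1)/(2a^N))`
and side length `1/a^(N+1)`; for `0 ≤ U, V ≤ a^N - 1` these are the open squares
removed at stage `N+1` of the construction of the Sierpinski carpet `S_a`. -/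
def carpetOpenSquare (a : ℤ) (N : ℕ) (U V : ℤ) : Set (ℝ × ℝ) :=
  {z | |z.1 - (2 * (U : ℝ) + 1) / (2 * (a : ℝ) ^ N)| < 1 / (2 * (a : ℝ) ^ (N + 1)) ∧
       |z.2 - (2 * (V : ℝ) + 1) / (2 * (a : ℝ) ^ N)| < 1 / (2 * (a : ℝ) ^ (N + 1))}

theorem Aslope_line_disjoint_from_open_squares
    (a p q : ℤ) (ha_odd : Odd a) (ha : 3 ≤ a)
    (hp : 0 ≤ p) (hpq : p < q) (hodd : Odd (p + q)) (hsum : p + q ≤ a) :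
    ∀ (N : ℕ) (U V : ℤ),
      Disjoint {z : ℝ × ℝ | (p : ℝ) * z.1 = (q : ℝ) * z.2}
        (carpetOpenSquare a N U V) := by
  intro N U V
  rw [Set.disjoint_left]
  rintro ⟨x, y⟩ hline ⟨hx, hy⟩
  simp only [Set.mem_setOf_eq] at hline
  have hA : (3:ℝ) ≤ (a:ℝ) := by exact_mod_cast ha
  have hAN : (0:ℝ) < (a:ℝ) ^ N := by positivity
  have hAN1 : (0:ℝ) < (a:ℝ) ^ (N+1) := by positivity
  set M : ℤ := p*(2*U+1) - q*(2*V+1) with hM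
  -- M is odd, hence nonzero
  obtain ⟨k, hk⟩ := hodd
  have hdvd : (2:ℤ) ∣ M - (p - q) := ⟨p*U - q*V, by rw [hM]; ring⟩
  have hModd : M ≠ 0 := by
    rcases hdvd with ⟨c, hc⟩
    omega
  -- key equation
  have hANne : ((a:ℝ) ^ N) ≠ 0 := ne_of_gt hAN
  have key_eq : (M:ℝ) = 2*(a:ℝ)^N*((q:ℝ)*(y - (2*(V:ℝ)+1)/(2*(a:ℝ)^N))
      - (p:ℝ)*(x - (2*(U:ℝ)+1)/(2*(a:ℝ)^N))) := by
    push_cast [hM]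
    field_simp
    linear_combination (2*(a:ℝ)^N) * hline
  have hx' := abs_lt.mp hx
  have hy' := abs_lt.mp hy
  have hp' : (0:ℝ) ≤ (p:ℝ) := by exact_mod_cast hp
  have hq' : (p:ℝ) < (q:ℝ) := by exact_mod_cast hpq
  have hsum' : (p:ℝ) + (q:ℝ) ≤ (a:ℝ) := by exact_mod_cast hsum
  have hpow : (a:ℝ)^(N+1) = (a:ℝ)^N * (a:ℝ) := pow_succ _ _
  set e : ℝ := 1 / (2 * (a:ℝ) ^ (N + 1)) with he
  have he0 : 0 < e := by positivity
  have hub : (M:ℝ) < 1 := by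
    rw [key_eq]
    have h1 : (q:ℝ)*(y - (2*(V:ℝ)+1)/(2*(a:ℝ)^N)) < (q:ℝ) * e :=
      mul_lt_mul_of_pos_left hy'.2 (by linarith)
    have h2 : -((p:ℝ)*(x - (2*(U:ℝ)+1)/(2*(a:ℝ)^N))) ≤ (p:ℝ) * e := by
      nlinarith [hx'.1]
    have h3 : 2*(a:ℝ)^N * (((p:ℝ)+(q:ℝ)) * e) ≤ 1 := by
      rw [he, hpow]
      have : ((p:ℝ)+(q:ℝ)) * (1 / (2 * ((a:ℝ)^N * (a:ℝ)))) ≤ (a:ℝ) * (1 / (2 * ((a:ℝ)^N * (a:ℝ)))) := by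
        apply mul_le_mul_of_nonneg_right (by linarith) (by positivity)
      calc 2*(a:ℝ)^N * (((p:ℝ)+(q:ℝ)) * (1 / (2 * ((a:ℝ)^N * (a:ℝ)))))
          ≤ 2*(a:ℝ)^N * ((a:ℝ) * (1 / (2 * ((a:ℝ)^N * (a:ℝ))))) := by
            apply mul_le_mul_of_nonneg_left this (by positivity)
        _ = 1 := by field_simp
    nlinarith
  have hlb : -1 < (M:ℝ) := by
    rw [key_eq]
    have h1 : -((q:ℝ) * e) < (q:ℝ)*(y - (2*(V:ℝ)+1)/(2*(a:ℝ)^N)) := by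
      nlinarith [hy'.1]
    have h2 : -((p:ℝ) * e) ≤ -((p:ℝ)*(x - (2*(U:ℝ)+1)/(2*(a:ℝ)^N))) := by
      nlinarith [hx'.2]
    have h3 : 2*(a:ℝ)^N * (((p:ℝ)+(q:ℝ)) * e) ≤ 1 := by
      rw [he, hpow]
      have : ((p:ℝ)+(q:ℝ)) * (1 / (2 * ((a:ℝ)^N * (a:ℝ)))) ≤ (a:ℝ) * (1 / (2 * ((a:ℝ)^N * (a:ℝ)))) := by
        apply mul_le_mul_of_nonneg_right (by linarith) (by positivity)
      calc 2*(a:ℝ)^N * (((p:ℝ)+(q:ℝ)) * (1 / (2 * ((a:ℝ)^N * (a:ℝ)))))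
          ≤ 2*(a:ℝ)^N * ((a:ℝ) * (1 / (2 * ((a:ℝ)^N * (a:ℝ))))) := by
            apply mul_le_mul_of_nonneg_left this (by positivity)
        _ = 1 := by field_simp
    nlinarith
  have hub' : M < 1 := by exact_mod_cast hub
  have hlb' : (-1:ℤ) < M := by exact_mod_cast hlb
  omega
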